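/- Let X be a complex Banach space with dim X ≥ 3 and let M, N ∈ N₁(X) be linearly independent. Then the following are equivalent: (1) M ~ N, i.e., range(M) = range(N) or ker(M) = ker(N); (2) there exists B ∈ N₁(X) that is not a scalar multiple of M and not a scalar multiple of N, such that for every T ∈ B(X): if MTM ∉ N₁(X) and NTN ∉ N₁(X), then BTB ∉ N₁(X). -/

import Mathlib

set_option synthInstance.maxHeartbeats 1000000
set_option maxHeartbeats 1000000

/-- A bounded operator is a rank-one nilpotent if its range is one-dimensional
and its square is zero. -/
def IsRankOneNilpotent {X : Type*} [NormedAddCommGroup X] [NormedSpace ℂ X]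
    (N : X →L[ℂ] X) : Prop :=
  Module.rank ℂ (LinearMap.range (N : X →ₗ[ℂ] X)) = 1 ∧ N ^ 2 = 0

section Helpers

variable {X : Type*} [NormedAddCommGroup X] [NormedSpace ℂ X]

/-- Representation of a rank-one nilpotent as `x ↦ φ x • w` with `φ w = 0`. -/
theorem IsRankOneNilpotent.rep {A : X →L[ℂ] X} (hA : IsRankOneNilpotent A) :
    ∃ (w : X) (φ : X →L[ℂ] ℂ), w ≠ 0 ∧ φ ≠ 0 ∧ φ w = 0 ∧ ∀ x, A x = φ x • w := by
  obtain ⟨v₀, hv₀ne, hv₀⟩ := rank_eq_one_iff.1 hA.1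
  have hwne : (v₀ : X) ≠ 0 := fun h => hv₀ne (Subtype.ext h)
  have hmem : ∀ x, A x ∈ (ℂ ∙ (v₀ : X) : Submodule ℂ X) := by
    intro x
    obtain ⟨r, hr⟩ := hv₀ ⟨A x, LinearMap.mem_range_self _ x⟩
    have hr' : r • (v₀ : X) = A x := congrArg Subtype.val hr
    exact Submodule.mem_span_singleton.2 ⟨r, hr'⟩
  let φ : X →L[ℂ] ℂ :=
    (ContinuousLinearEquiv.coord ℂ (v₀ : X) hwne).comp
      (A.codRestrict (ℂ ∙ (v₀ : X)) hmem)
  have hrep : ∀ x, A x = φ x • (v₀ : X) := by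
    intro x
    have h1 := ContinuousLinearEquiv.toSpanNonzeroSingleton_coord (𝕜 := ℂ) hwne
      (A.codRestrict (ℂ ∙ (v₀ : X)) hmem x)
    have h2 := congrArg Subtype.val h1
    exact h2.symm
  have hAA : ∀ y, A (A y) = 0 := by
    intro y
    have h2 : (A ^ 2) y = 0 := by rw [hA.2]; rfl
    rw [pow_two] at h2
    exact h2
  obtain ⟨y, hy⟩ : ∃ y, A y = (v₀ : X) := v₀.2
  have hφw : φ (v₀ : X) = 0 := by
    have h0 : A (v₀ : X) = 0 := by rw [← hy]; exact hAA y
    have h1 : φ (v₀ : X) • (v₀ : X) = 0 := by rw [← hrep]; exact h0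
    by_contra hc
    exact hwne (by
      calc (v₀ : X) = (φ (v₀ : X))⁻¹ • (φ (v₀ : X) • (v₀ : X)) := by
            rw [smul_smul, inv_mul_cancel₀ hc, one_smul]
        _ = 0 := by rw [h1, smul_zero])
  have hφne : φ ≠ 0 := by
    intro h0
    have : A y = 0 := by rw [hrep y, h0]; simp
    rw [hy] at this
    exact hwne this
  exact ⟨(v₀ : X), φ, hwne, hφne, hφw, hrep⟩

theorem range_eq_of_rep {A : X →L[ℂ] X} {w : X} {φ : X →L[ℂ] ℂ} (hφ : φ ≠ 0)
    (hrep : ∀ x, A x = φ x • w) : LinearMap.range (A : X →ₗ[ℂ] X) = (ℂ ∙ w : Submodule ℂ X) := by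
  apply le_antisymm
  · rintro _ ⟨x, rfl⟩
    rw [ContinuousLinearMap.coe_coe, hrep]
    exact Submodule.smul_mem _ _ (Submodule.mem_span_singleton_self w)
  · obtain ⟨y, hy⟩ := DFunLike.ne_iff.1 hφ
    rw [Submodule.span_singleton_le_iff_mem]
    refine ⟨(φ y)⁻¹ • y, ?_⟩
    rw [ContinuousLinearMap.coe_coe, hrep]
    simp only [map_smul, smul_eq_mul]
    rw [inv_mul_cancel₀ (by simpa using hy), one_smul]

theorem ker_eq_of_rep {A : X →L[ℂ] X} {w : X} {φ : X →L[ℂ] ℂ} (hw : w ≠ 0)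
    (hrep : ∀ x, A x = φ x • w) : LinearMap.ker (A : X →ₗ[ℂ] X) = LinearMap.ker (φ : X →ₗ[ℂ] ℂ) := by
  ext x
  simp only [LinearMap.mem_ker, ContinuousLinearMap.coe_coe, hrep x]
  constructor
  · intro h
    by_contra hc
    exact hw (by
      calc w = (φ x)⁻¹ • (φ x • w) := by rw [smul_smul, inv_mul_cancel₀ hc, one_smul]
        _ = 0 := by rw [h, smul_zero])
  · intro h; rw [h, zero_smul]

theorem isRankOneNilpotent_of_rep {A : X →L[ℂ] X} {w : X} {φ : X →L[ℂ] ℂ}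
    (hw : w ≠ 0) (hφ : φ ≠ 0) (hφw : φ w = 0) (hrep : ∀ x, A x = φ x • w) :
    IsRankOneNilpotent A := by
  constructor
  · rw [range_eq_of_rep hφ hrep]
    rw [rank_submodule_eq_one_iff]
    exact ⟨w, Submodule.mem_span_singleton_self w, hw, le_rfl⟩
  · ext x
    rw [pow_two]
    simp only [ContinuousLinearMap.mul_apply, ContinuousLinearMap.zero_apply]
    rw [hrep x, map_smul, hrep w, hφw, zero_smul, smul_zero]

theorem not_isRankOneNilpotent_zero : ¬ IsRankOneNilpotent (0 : X →L[ℂ] X) := by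
  rintro ⟨h1, -⟩
  have h0 : LinearMap.range ((0 : X →L[ℂ] X) : X →ₗ[ℂ] X) = (⊥ : Submodule ℂ X) := by
    apply le_antisymm
    · rintro _ ⟨x, rfl⟩; simp
    · exact bot_le
  rw [h0] at h1
  simp at h1

theorem IsRankOneNilpotent.smul_ne {A : X →L[ℂ] X} (hA : IsRankOneNilpotent A) {c : ℂ}
    (hc : c ≠ 0) : IsRankOneNilpotent (c • A) := by
  obtain ⟨w, φ, hw, hφ, hφw, hrep⟩ := hA.rep
  refine isRankOneNilpotent_of_rep (φ := c • φ) hw ?_ (by simp [hφw]) ?_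
  · intro h0
    obtain ⟨y, hy⟩ := DFunLike.ne_iff.1 hφ
    have hy' : (c • φ) y = 0 := by rw [h0]; rfl
    simp only [ContinuousLinearMap.smul_apply, smul_eq_mul] at hy'
    rcases mul_eq_zero.1 hy' with h | h
    · exact hc h
    · exact (by simpa using hy : φ y ≠ 0) h
  · intro x
    simp only [ContinuousLinearMap.smul_apply, smul_eq_mul, hrep x, smul_smul]

theorem sandwich_eq {A T : X →L[ℂ] X} {w : X} {φ : X →L[ℂ] ℂ}
    (hrep : ∀ x, A x = φ x • w) : A * T * A = φ (T w) • A := by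
  ext x
  simp only [ContinuousLinearMap.mul_apply, ContinuousLinearMap.smul_apply]
  rw [hrep x, map_smul, map_smul, hrep (T w), smul_smul, smul_smul, mul_comm]

theorem sandwich_iff {A T : X →L[ℂ] X} {w : X} {φ : X →L[ℂ] ℂ}
    (hA : IsRankOneNilpotent A) (hrep : ∀ x, A x = φ x • w) :
    IsRankOneNilpotent (A * T * A) ↔ φ (T w) ≠ 0 := by
  rw [sandwich_eq hrep]
  constructor
  · intro h hc
    rw [hc, zero_smul] at h
    exact not_isRankOneNilpotent_zero h
  · exact fun hc => hA.smul_ne hc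

/-- Hahn–Banach: a functional vanishing on a closed subspace and nonzero at a point
outside it. -/
theorem exists_functional_vanishing {S : Submodule ℂ X} (hS : IsClosed (S : Set X))
    {y : X} (hy : y ∉ S) :
    ∃ φ : X →L[ℂ] ℂ, (∀ s ∈ S, φ s = 0) ∧ φ y ≠ 0 := by
  haveI : IsClosed (S : Set X) := hS
  have hy' : (Submodule.Quotient.mk y : X ⧸ S) ≠ 0 := by
    simpa [Submodule.Quotient.mk_eq_zero] using hy
  obtain ⟨ψ, hψ⟩ := SeparatingDual.exists_ne_zero (R := ℂ) hy'
  let q : X →L[ℂ] X ⧸ S :=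
    LinearMap.mkContinuous S.mkQ 1 (fun x => by
      simpa using Submodule.Quotient.norm_mk_le S x)
  refine ⟨ψ.comp q, fun s hs => ?_, ?_⟩
  · have : q s = 0 := by
      show (Submodule.Quotient.mk s : X ⧸ S) = 0
      exact (Submodule.Quotient.mk_eq_zero S).2 hs
    simp [ContinuousLinearMap.comp_apply, this]
  · exact hψ

/-- If two functionals have different kernels, there is a point where the first is
nonzero and the second vanishes. -/
theorem exists_sep_of_ker_ne {f g : X →L[ℂ] ℂ} (hf : f ≠ 0)
    (hne : LinearMap.ker (f : X →ₗ[ℂ] ℂ) ≠ LinearMap.ker (g : X →ₗ[ℂ] ℂ)) :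
    ∃ x, f x ≠ 0 ∧ g x = 0 := by
  by_contra hcon
  push_neg at hcon
  -- so ker g ≤ ker f
  have hker : ∀ x, g x = 0 → f x = 0 := by
    intro x hx
    by_contra hfx
    exact (hcon x hfx) hx
  obtain ⟨y, hy⟩ := DFunLike.ne_iff.1 hf
  have hgy : g y ≠ 0 := by
    intro h0
    exact hy (by simpa using hker y h0)
  have hfy : f y ≠ 0 := by simpa using hy
  -- f = (f y / g y) • g
  have hfg : ∀ x, f x = f y / g y * g x := by
    intro x
    have hmem : g (x - (g x / g y) • y) = 0 := by
      simp only [map_sub, map_smul, smul_eq_mul]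
      field_simp
      ring
    have := hker _ hmem
    simp only [map_sub, map_smul, smul_eq_mul] at this
    have hx : f x = g x / g y * f y := by linear_combination this
    rw [hx]; ring
  apply hne
  ext x
  simp only [LinearMap.mem_ker, ContinuousLinearMap.coe_coe]
  constructor
  · intro h
    have := hfg x
    rw [h] at this
    have ht : f y / g y ≠ 0 := div_ne_zero hfy hgy
    rcases mul_eq_zero.1 this.symm with h1 | h1
    · exact absurd h1 ht
    · exact h1
  · intro h
    rw [hfg x, h, mul_zero]

/-- If two nonzero functionals have the same kernel, they are proportional. -/
theorem eq_smul_of_ker_eq {f g : X →L[ℂ] ℂ} (hf : f ≠ 0)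
    (h : LinearMap.ker (f : X →ₗ[ℂ] ℂ) = LinearMap.ker (g : X →ₗ[ℂ] ℂ)) :
    ∃ t : ℂ, t ≠ 0 ∧ ∀ x, g x = t * f x := by
  obtain ⟨y, hy⟩ := DFunLike.ne_iff.1 hf
  have hfy : f y ≠ 0 := by simpa using hy
  have hgy : g y ≠ 0 := by
    intro h0
    have : y ∈ LinearMap.ker (f : X →ₗ[ℂ] ℂ) := h ▸ (by simpa using h0)
    exact hfy (by simpa using this)
  refine ⟨g y / f y, div_ne_zero hgy hfy, fun x => ?_⟩
  have hmem : f (x - (f x / f y) • y) = 0 := by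
    simp only [map_sub, map_smul, smul_eq_mul]
    field_simp
    ring
  have hmem' : g (x - (f x / f y) • y) = 0 := by
    have : x - (f x / f y) • y ∈ LinearMap.ker (f : X →ₗ[ℂ] ℂ) := by simpa using hmem
    rw [h] at this
    simpa using this
  simp only [map_sub, map_smul, smul_eq_mul] at hmem'
  have : g x = f x / f y * g y := by linear_combination hmem'
  rw [this]; ring

end Helpers

theorem sim_iff_exists_B {X : Type*}
    [NormedAddCommGroup X] [NormedSpace ℂ X] [CompleteSpace X]
    (hdim : 3 ≤ Module.rank ℂ X) (M N : X →L[ℂ] X)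
    (hM : IsRankOneNilpotent M) (hN : IsRankOneNilpotent N)
    (hind : LinearIndependent ℂ ![M, N]) :
    (LinearMap.range (M : X →ₗ[ℂ] X) = LinearMap.range (N : X →ₗ[ℂ] X) ∨
      LinearMap.ker (M : X →ₗ[ℂ] X) = LinearMap.ker (N : X →ₗ[ℂ] X)) ↔
      (∃ B : X →L[ℂ] X, IsRankOneNilpotent B ∧
        (∀ c : ℂ, B ≠ c • M) ∧ (∀ c : ℂ, B ≠ c • N) ∧
        (∀ T : X →L[ℂ] X,
          (¬ IsRankOneNilpotent (M * T * M) ∧ ¬ IsRankOneNilpotent (N * T * N)) →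
            ¬ IsRankOneNilpotent (B * T * B))) := by
  obtain ⟨u, f, hu, hf, hfu, hMrep⟩ := hM.rep
  obtain ⟨v, g, hv, hg, hgv, hNrep⟩ := hN.rep
  have hpair : ∀ s t : ℂ, s • M + t • N = 0 → s = 0 ∧ t = 0 :=
    LinearIndependent.pair_iff.1 hind
  have hMN : M + N ≠ 0 := by
    intro h
    have := hpair 1 1 (by simpa using h)
    exact one_ne_zero this.1
  have hBM : ∀ c : ℂ, M + N ≠ c • M := by
    intro c h
    have : (1 - c) • M + (1 : ℂ) • N = 0 := by
      rw [sub_smul, one_smul, one_smul, sub_add_eq_add_sub, h, sub_self]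
    exact one_ne_zero (hpair _ _ this).2
  have hBN : ∀ c : ℂ, M + N ≠ c • N := by
    intro c h
    have : (1 : ℂ) • M + (1 - c) • N = 0 := by
      rw [sub_smul, one_smul, one_smul, ← add_sub_assoc, h, sub_self]
    exact one_ne_zero (hpair _ _ this).1
  constructor
  · -- forward direction: B := M + N works
    rintro (hrange | hker)
    · -- ranges equal
      rw [range_eq_of_rep hf hMrep, range_eq_of_rep hg hNrep] at hrange
      have hvmem : v ∈ (ℂ ∙ u : Submodule ℂ X) :=
        hrange ▸ Submodule.mem_span_singleton_self v
      obtain ⟨t, htv⟩ := Submodule.mem_span_singleton.1 hvmem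
      have ht : t ≠ 0 := by
        intro h0; rw [h0, zero_smul] at htv; exact hv htv.symm
      have hgu : g u = 0 := by
        have : g (t • u) = 0 := by rw [htv]; exact hgv
        simp only [map_smul, smul_eq_mul] at this
        exact (mul_eq_zero.1 this).resolve_left ht
      -- B = M + N, with representation (f + t • g) ⊗ u
      set φB : X →L[ℂ] ℂ := f + t • g with hφB
      have hBrep : ∀ x, (M + N) x = φB x • u := by
        intro x
        have h1 : φB x = f x + t * g x := by
          simp [hφB]
        rw [h1, ContinuousLinearMap.add_apply, hMrep x, hNrep x, ← htv, smul_smul, add_smul]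
        congr 1
        rw [mul_comm]
      have hφBu : φB u = 0 := by
        simp [hφB, hfu, hgu]
      have hφBne : φB ≠ 0 := by
        intro h0
        apply hMN
        ext x
        rw [hBrep x, h0]
        simp
      refine ⟨M + N, isRankOneNilpotent_of_rep hu hφBne hφBu hBrep, hBM, hBN, ?_⟩
      intro T ⟨hT1, hT2⟩
      rw [sandwich_iff hM hMrep] at hT1
      rw [sandwich_iff hN hNrep] at hT2
      push_neg at hT1 hT2
      rw [sandwich_iff (isRankOneNilpotent_of_rep hu hφBne hφBu hBrep) hBrep]
      push_neg
      have hgTu : g (T u) = 0 := by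
        have : g (T v) = 0 := hT2
        rw [← htv] at this
        simp only [map_smul, smul_eq_mul] at this
        exact (mul_eq_zero.1 this).resolve_left ht
      simp [hφB, hT1, hgTu]
    · -- kernels equal
      rw [ker_eq_of_rep hu hMrep, ker_eq_of_rep hv hNrep] at hker
      obtain ⟨t, ht, htg⟩ := eq_smul_of_ker_eq hf hker
      have hfv : f v = 0 := by
        have := htg v
        rw [hgv] at this
        have := this.symm
        exact (mul_eq_zero.1 this).resolve_left ht
      -- B = M + N with representation f ⊗ (u + t • v)
      set wB : X := u + t • v with hwB
      have hBrep : ∀ x, (M + N) x = f x • wB := by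
        intro x
        simp only [ContinuousLinearMap.add_apply, hMrep x, hNrep x, hwB, smul_add,
          smul_smul, htg x]
        ring_nf
      have hwBne : wB ≠ 0 := by
        intro h0
        apply hMN
        ext x
        rw [show (M + N) x = f x • wB from hBrep x, h0]
        simp
      have hfwB : f wB = 0 := by
        simp [hwB, hfu, hfv]
      refine ⟨M + N, isRankOneNilpotent_of_rep hwBne hf hfwB hBrep, hBM, hBN, ?_⟩
      intro T ⟨hT1, hT2⟩
      rw [sandwich_iff hM hMrep] at hT1
      rw [sandwich_iff hN hNrep] at hT2
      push_neg at hT1 hT2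
      rw [sandwich_iff (isRankOneNilpotent_of_rep hwBne hf hfwB hBrep) hBrep]
      push_neg
      have hfTv : f (T v) = 0 := by
        have := htg (T v)
        rw [hT2] at this
        exact (mul_eq_zero.1 this.symm).resolve_left ht
      simp [hwB, hT1, hfTv]
  · -- reverse direction
    rintro ⟨B, hB, hBneM, hBneN, hprop⟩
    obtain ⟨w, h, hwne, hhne, hhw, hBrep⟩ := hB.rep
    have P : ∀ T : X →L[ℂ] X, f (T u) = 0 → g (T v) = 0 → h (T w) = 0 := by
      intro T h1 h2
      have hc := hprop T ⟨by rw [sandwich_iff hM hMrep]; simpa using h1,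
        by rw [sandwich_iff hN hNrep]; simpa using h2⟩
      rw [sandwich_iff hB hBrep] at hc
      simpa using hc
    by_contra hcon
    push_neg at hcon
    obtain ⟨hrne, hkne⟩ := hcon
    -- u, v span distinct lines; f, g have distinct kernels
    rw [range_eq_of_rep hf hMrep, range_eq_of_rep hg hNrep] at hrne
    rw [ker_eq_of_rep hu hMrep, ker_eq_of_rep hv hNrep] at hkne
    have hvnotin : v ∉ (ℂ ∙ u : Submodule ℂ X) := by
      intro hmem
      obtain ⟨t, htv⟩ := Submodule.mem_span_singleton.1 hmem
      have ht : t ≠ 0 := by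
        intro h0; rw [h0, zero_smul] at htv; exact hv htv.symm
      apply hrne
      apply le_antisymm
      · rw [Submodule.span_singleton_le_iff_mem]
        have hu' : u = t⁻¹ • v := by
          rw [← htv, smul_smul, inv_mul_cancel₀ ht, one_smul]
        rw [hu']
        exact Submodule.smul_mem _ _ (Submodule.mem_span_singleton_self _)
      · rw [Submodule.span_singleton_le_iff_mem]
        exact hmem
    have hunotin : u ∉ (ℂ ∙ v : Submodule ℂ X) := by
      intro hmem
      obtain ⟨t, htu⟩ := Submodule.mem_span_singleton.1 hmem
      have ht : t ≠ 0 := by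
        intro h0; rw [h0, zero_smul] at htu; exact hu htu.symm
      apply hrne
      apply le_antisymm
      · rw [Submodule.span_singleton_le_iff_mem]
        exact hmem
      · rw [Submodule.span_singleton_le_iff_mem]
        have hv' : v = t⁻¹ • u := by
          rw [← htu, smul_smul, inv_mul_cancel₀ ht, one_smul]
        rw [hv']
        exact Submodule.smul_mem _ _ (Submodule.mem_span_singleton_self _)
    obtain ⟨x₁, hfx₁, hgx₁⟩ := exists_sep_of_ker_ne hf hkne
    obtain ⟨x₂, hgx₂, hfx₂⟩ := exists_sep_of_ker_ne hg (Ne.symm hkne)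
    -- Step 1 : w ∈ span {u, v}
    have hS : IsClosed ((Submodule.span ℂ {u, v} : Submodule ℂ X) : Set X) := by
      haveI : FiniteDimensional ℂ (Submodule.span ℂ ({u, v} : Set X)) :=
        FiniteDimensional.span_of_finite ℂ (Set.toFinite _)
      exact Submodule.closed_of_finiteDimensional _
    have hwmem : w ∈ Submodule.span ℂ ({u, v} : Set X) := by
      by_contra hwnot
      obtain ⟨φ, hφ0, hφw⟩ := exists_functional_vanishing hS hwnot
      obtain ⟨x₀, hx₀⟩ := DFunLike.ne_iff.1 hhne
      have hx₀' : h x₀ ≠ 0 := by simpa using hx₀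
      have := P (φ.smulRight x₀) ?_ ?_
      · simp only [ContinuousLinearMap.smulRight_apply, map_smul, smul_eq_mul] at this
        rcases mul_eq_zero.1 this with h1 | h1
        · exact hφw h1
        · exact hx₀' h1
      · simp only [ContinuousLinearMap.smulRight_apply, map_smul, smul_eq_mul]
        rw [hφ0 u (Submodule.subset_span (by simp)), zero_mul]
      · simp only [ContinuousLinearMap.smulRight_apply, map_smul, smul_eq_mul]
        rw [hφ0 v (Submodule.subset_span (by simp)), zero_mul]
    obtain ⟨a, b, hab⟩ := Submodule.mem_span_pair.1 hwmem
    -- Step 2 : h ∈ span {f, g} (pointwise)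
    have hspan : ∃ c d : ℂ, ∀ x, h x = c * f x + d * g x := by
      by_cases hx0 : ∃ x₀, f x₀ = 0 ∧ g x₀ = 0 ∧ h x₀ ≠ 0
      · exfalso
        obtain ⟨x₀, hfx₀, hgx₀, hhx₀⟩ := hx0
        obtain ⟨φ, hφw⟩ := SeparatingDual.exists_ne_zero (R := ℂ) hwne
        have := P (φ.smulRight x₀) ?_ ?_
        · simp only [ContinuousLinearMap.smulRight_apply, map_smul, smul_eq_mul] at this
          rcases mul_eq_zero.1 this with h1 | h1
          · exact hφw h1
          · exact hhx₀ h1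
        · simp [ContinuousLinearMap.smulRight_apply, hfx₀]
        · simp [ContinuousLinearMap.smulRight_apply, hgx₀]
      · push_neg at hx0
        refine ⟨h x₁ / f x₁, h x₂ / g x₂, fun x => ?_⟩
        set y : X := x - (f x / f x₁) • x₁ - (g x / g x₂) • x₂ with hy
        have hfy : f y = 0 := by
          simp only [hy, map_sub, map_smul, smul_eq_mul, hfx₂]
          field_simp
          ring
        have hgy : g y = 0 := by
          simp only [hy, map_sub, map_smul, smul_eq_mul, hgx₁]
          field_simp
          ring
        have hhy : h y = 0 := hx0 y hfy hgy
        simp only [hy, map_sub, map_smul, smul_eq_mul] at hhy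
        have : h x = f x / f x₁ * h x₁ + g x / g x₂ * h x₂ := by linear_combination hhy
        rw [this]
        field_simp
    obtain ⟨c, d, hcd⟩ := hspan
    -- Step 3 : get the constraints b*c = 0 and a*d = 0
    have hSu : IsClosed ((ℂ ∙ u : Submodule ℂ X) : Set X) := by
      haveI : FiniteDimensional ℂ (ℂ ∙ u : Submodule ℂ X) :=
        FiniteDimensional.span_of_finite ℂ (Set.toFinite _)
      exact Submodule.closed_of_finiteDimensional _
    have hSv : IsClosed ((ℂ ∙ v : Submodule ℂ X) : Set X) := by
      haveI : FiniteDimensional ℂ (ℂ ∙ v : Submodule ℂ X) :=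
        FiniteDimensional.span_of_finite ℂ (Set.toFinite _)
      exact Submodule.closed_of_finiteDimensional _
    obtain ⟨φ₁, hφ₁0, hφ₁v⟩ := exists_functional_vanishing hSu hvnotin
    obtain ⟨φ₂, hφ₂0, hφ₂u⟩ := exists_functional_vanishing hSv hunotin
    have hφ₁u : φ₁ u = 0 := hφ₁0 u (Submodule.mem_span_singleton_self u)
    have hφ₂v : φ₂ v = 0 := hφ₂0 v (Submodule.mem_span_singleton_self v)
    have hbc : b * c = 0 := by
      have := P (φ₁.smulRight x₁) ?_ ?_
      · simp only [ContinuousLinearMap.smulRight_apply, map_smul, smul_eq_mul] at this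
        rw [← hab] at this
        simp only [map_add, map_smul, smul_eq_mul, hφ₁u] at this
        rw [hcd x₁, hgx₁] at this
        have h2 : φ₁ v * (b * (c * f x₁)) = 0 := by linear_combination this
        rcases mul_eq_zero.1 h2 with h3 | h3
        · exact absurd h3 hφ₁v
        · rcases mul_eq_zero.1 h3 with h4 | h4
          · rw [h4, zero_mul]
          · rcases mul_eq_zero.1 h4 with h5 | h5
            · rw [h5, mul_zero]
            · exact absurd h5 hfx₁
      · simp [ContinuousLinearMap.smulRight_apply, hφ₁u]
      · simp [ContinuousLinearMap.smulRight_apply, hgx₁]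
    have had : a * d = 0 := by
      have := P (φ₂.smulRight x₂) ?_ ?_
      · simp only [ContinuousLinearMap.smulRight_apply, map_smul, smul_eq_mul] at this
        rw [← hab] at this
        simp only [map_add, map_smul, smul_eq_mul, hφ₂v] at this
        rw [hcd x₂, hfx₂] at this
        have h2 : φ₂ u * (a * (d * g x₂)) = 0 := by linear_combination this
        rcases mul_eq_zero.1 h2 with h3 | h3
        · exact absurd h3 hφ₂u
        · rcases mul_eq_zero.1 h3 with h4 | h4
          · rw [h4, zero_mul]
          · rcases mul_eq_zero.1 h4 with h5 | h5
            · rw [h5, mul_zero]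
            · exact absurd h5 hgx₂
      · simp [ContinuousLinearMap.smulRight_apply, hfx₂]
      · simp [ContinuousLinearMap.smulRight_apply, hφ₂v]
    -- Step 4 : derive a contradiction
    have habne : ¬ (a = 0 ∧ b = 0) := by
      rintro ⟨ha0, hb0⟩
      apply hwne
      rw [← hab, ha0, hb0, zero_smul, zero_smul, add_zero]
    have hcdne : ¬ (c = 0 ∧ d = 0) := by
      rintro ⟨hc0, hd0⟩
      apply hhne
      ext x
      simp [hcd x, hc0, hd0]
    have hcaseM : ¬ (b = 0 ∧ d = 0) := by
      rintro ⟨hb0, hd0⟩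
      apply hBneM (c * a)
      ext x
      have hx : B x = (c * a) • M x := by
        rw [hBrep x, hMrep x, ← hab, hb0, hcd x, hd0]
        simp only [zero_mul, zero_smul, add_zero]
        rw [smul_smul, smul_smul]
        congr 1
        ring
      simpa using hx
    have hcaseN : ¬ (a = 0 ∧ c = 0) := by
      rintro ⟨ha0, hc0⟩
      apply hBneN (d * b)
      ext x
      have hx : B x = (d * b) • N x := by
        rw [hBrep x, hNrep x, ← hab, ha0, hcd x, hc0]
        simp only [zero_mul, zero_smul, zero_add]
        rw [smul_smul, smul_smul]
        congr 1
        ring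
      simpa using hx
    rcases mul_eq_zero.1 hbc with hb0 | hc0
    · rcases mul_eq_zero.1 had with ha0 | hd0
      · exact habne ⟨ha0, hb0⟩
      · exact hcaseM ⟨hb0, hd0⟩
    · rcases mul_eq_zero.1 had with ha0 | hd0
      · exact hcaseN ⟨ha0, hc0⟩
      · exact hcdne ⟨hc0, hd0⟩
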